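/- Let X and Y be metric spaces, Φ : X → 2^Y a multifunction, u : Gr(Φ) → ℝ∪{±∞}, and E ⊆ Dom(Φ). Then u is KN-inf-compact on Gr_E(Φ) (sequential version) if and only if for every sequence (x_n, y_n) in Gr(Φ) with x_n → x ∈ E and liminf_{n→∞} u(x_n, y_n) < +∞, there exists a subsequence (y_{n_k}) converging to some y ∈ Φ(x) with u(x,y) ≤ liminf_{n→∞} u(x_n, y_n). -/
import Mathlib


open Filter Topology Set

lemma aux_exists_subseq_tendsto_liminf (v : ℕ → EReal) :
    ∃ φ : ℕ → ℕ, StrictMono φ ∧ Tendsto (v ∘ φ) atTop (𝓝 (liminf v atTop)) := by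
  rcases eq_top_or_lt_top (liminf v atTop) with htop | hlt
  · refine ⟨id, strictMono_id, ?_⟩
    have hsup : limsup v atTop = ⊤ := top_le_iff.1 (htop ▸ liminf_le_limsup)
    rw [Function.comp_id]
    exact tendsto_of_liminf_eq_limsup rfl (hsup.trans htop.symm)
  · obtain ⟨c, hc_anti, hc_mem, hc_tendsto⟩ := exists_seq_strictAnti_tendsto' hlt
    have hfreq : ∀ k, ∃ᶠ n in atTop, v n < c k := fun k =>
      frequently_lt_of_liminf_lt (h := (hc_mem k).1)
    obtain ⟨φ, hφ, hφv⟩ := extraction_forall_of_frequently hfreq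
    refine ⟨φ, hφ, tendsto_of_le_liminf_of_limsup_le ?_ ?_⟩
    · have h1 := liminf_le_liminf_of_le (u := v) hφ.tendsto_atTop
      rwa [liminf, liminf, map_map] at h1
    · refine le_of_forall_gt_imp_ge_of_dense fun b hb => ?_
      have hev : ∀ᶠ k in atTop, c k < b := hc_tendsto.eventually_lt_const hb
      exact limsup_le_of_le (h := hev.mono fun k hk => ((hφv k).trans hk).le)

/-- For metric spaces `X` and `Y`, `u` is sequentially `KN`-inf-compact on `Gr_E(Φ)` if and only
if for every sequence `(x_n, y_n)` in the graph of `Φ` with `x_n → x ∈ E` and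
`liminf u x_n y_n < +∞`, there is a subsequence of `(y_n)` converging to some `y ∈ Φ x` with
`u x y ≤ liminf u x_n y_n`. -/
theorem stmt13 {X Y : Type*} [MetricSpace X] [MetricSpace Y]
    (Φ : X → Set Y) (u : X → Y → EReal) (E : Set X) (hE : E ⊆ {z | (Φ z).Nonempty}) :
    ((∀ x ∈ E, ∀ y ∈ Φ x, ∀ xn : ℕ → X, ∀ yn : ℕ → Y,
        (∀ n, yn n ∈ Φ (xn n)) → Tendsto xn atTop (𝓝 x) → Tendsto yn atTop (𝓝 y) →
        u x y ≤ liminf (fun n => u (xn n) (yn n)) atTop) ∧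
      (∀ x ∈ E, ∀ xn : ℕ → X, ∀ yn : ℕ → Y, (∀ n, yn n ∈ Φ (xn n)) →
        Tendsto xn atTop (𝓝 x) → (∃ C : ℝ, ∀ n, u (xn n) (yn n) ≤ (C : EReal)) →
        ∃ y ∈ Φ x, MapClusterPt y atTop yn)) ↔
    (∀ x ∈ E, ∀ xn : ℕ → X, ∀ yn : ℕ → Y, (∀ n, yn n ∈ Φ (xn n)) →
      Tendsto xn atTop (𝓝 x) → liminf (fun n => u (xn n) (yn n)) atTop < ⊤ →
      ∃ φ : ℕ → ℕ, StrictMono φ ∧ ∃ y ∈ Φ x, Tendsto (fun k => yn (φ k)) atTop (𝓝 y) ∧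
        u x y ≤ liminf (fun n => u (xn n) (yn n)) atTop) := by
  constructor
  · rintro ⟨hlsc, hcomp⟩ x hx xn yn hmem hxn hL
    set v : ℕ → EReal := fun n => u (xn n) (yn n) with hv
    obtain ⟨φ₁, hφ₁, hv₁⟩ := aux_exists_subseq_tendsto_liminf v
    obtain ⟨C, hLC, -⟩ := EReal.exists_between_coe_real hL
    obtain ⟨N, hN⟩ := eventually_atTop.1 (hv₁.eventually_le_const hLC)
    set φ₂ : ℕ → ℕ := fun k => φ₁ (k + N) with hφ₂def
    have hφ₂ : StrictMono φ₂ := fun a b h => hφ₁ (by omega)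
    obtain ⟨y, hyΦ, hclust⟩ := hcomp x hx (fun k => xn (φ₂ k)) (fun k => yn (φ₂ k))
      (fun k => hmem _) (hxn.comp hφ₂.tendsto_atTop)
      ⟨C, fun k => hN _ (Nat.le_add_left N k)⟩
    obtain ⟨ψ, hψ, hyt⟩ := TopologicalSpace.FirstCountableTopology.tendsto_subseq hclust
    refine ⟨φ₂ ∘ ψ, hφ₂.comp hψ, y, hyΦ, hyt, ?_⟩
    have h1 := hlsc x hx y hyΦ (fun k => xn (φ₂ (ψ k))) (fun k => yn (φ₂ (ψ k)))
      (fun k => hmem _) (hxn.comp (hφ₂.comp hψ).tendsto_atTop) hyt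
    have h2 : Tendsto (fun k => v (φ₂ (ψ k))) atTop (𝓝 (liminf v atTop)) :=
      hv₁.comp (tendsto_atTop_mono (fun k => Nat.le_add_right (ψ k) N) hψ.tendsto_atTop)
    rwa [show liminf (fun k => u (xn (φ₂ (ψ k))) (yn (φ₂ (ψ k)))) atTop = liminf v atTop
      from h2.liminf_eq] at h1
  · intro h
    constructor
    · intro x hx y hy xn yn hmem hxn hyn
      rcases lt_or_ge (liminf (fun n => u (xn n) (yn n)) atTop) ⊤ with hlt | hge
      · obtain ⟨φ, hφ, y', hy', hty', hle⟩ := h x hx xn yn hmem hxn hlt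
        have hty : Tendsto (fun k => yn (φ k)) atTop (𝓝 y) := hyn.comp hφ.tendsto_atTop
        rwa [tendsto_nhds_unique hty' hty] at hle
      · exact le_trans le_top hge
    · rintro x hx xn yn hmem hxn ⟨C, hC⟩
      have hlt : liminf (fun n => u (xn n) (yn n)) atTop < ⊤ :=
        lt_of_le_of_lt (liminf_le_of_frequently_le (Frequently.of_forall hC)) (EReal.coe_lt_top C)
      obtain ⟨φ, hφ, y, hyΦ, hty, -⟩ := h x hx xn yn hmem hxn hlt
      exact ⟨y, hyΦ, MapClusterPt.of_comp hφ.tendsto_atTop hty.mapClusterPt⟩
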